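/- There exists an integer k₀ such that for all integers k ≥ k₀, det((p_2(x_i, x_j))_{i,j=0}^{k}) ≥ k^{−k²}. -/

import Mathlib

/-- The one-dimensional heat kernel `p_t(a,b)`. -/
noncomputable def heatK (t a b : ℝ) : ℝ :=
    (Real.sqrt (2 * Real.pi * t))⁻¹ * Real.exp (-(a - b) ^ 2 / (2 * t))

/-- The equally spaced starting points `x_i = (2i - k)/k`. -/
noncomputable def xPt (k : ℕ) (i : Fin (k + 1)) : ℝ := (2 * (i : ℝ) - k) / k

section PSDLemmas

open Matrix

variable {n : Type*} [Fintype n] [DecidableEq n]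

open scoped MatrixOrder

lemma det_one_add_psd {C : Matrix n n ℝ} (hC : C.PosSemidef) : 1 ≤ (1 + C).det := by
  have h1C : (1 + C).PosSemidef := Matrix.PosSemidef.add (Matrix.PosSemidef.one) hC
  have h := h1C.1
  have hdet : (1 + C).det = ∏ i, h.eigenvalues i := by
    simpa using h.det_eq_prod_eigenvalues
  rw [hdet]
  have h1 : (1:ℝ) = ∏ _i : n, 1 := by simp
  rw [h1]
  refine Finset.prod_le_prod (fun i _ => zero_le_one) (fun i _ => ?_)
  have hv := h.eigenvalues_eq i
  set v : n → ℝ := ⇑(h.eigenvectorBasis i) with hvdef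
  have hnorm : ‖h.eigenvectorBasis i‖ = 1 := h.eigenvectorBasis.orthonormal.1 i
  have hvv : dotProduct (star v) v = 1 := by
    have : (@inner ℝ _ _ (h.eigenvectorBasis i) (h.eigenvectorBasis i)) = 1 := by
      rw [real_inner_self_eq_norm_sq, hnorm]; norm_num
    rw [← this]
    simp [PiLp.inner_apply, dotProduct, hvdef, mul_comm]
    have h' := this
    rw [PiLp.inner_apply] at h'
    simpa [mul_comm, sq] using h'
  have : (1 + C) *ᵥ v = v + C *ᵥ v := by
    rw [Matrix.add_mulVec, Matrix.one_mulVec]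
  rw [hv, this, dotProduct_add, hvv]
  have := hC.dotProduct_mulVec_nonneg v
  simpa using this

lemma det_le_det_add_psd {A B : Matrix n n ℝ} (hA : A.PosSemidef) (hB : B.PosSemidef)
    (hdet : A.det ≠ 0) : A.det ≤ (A + B).det := by
  set S := CFC.sqrt A with hSdef
  have hS : S.PosSemidef := (CFC.sqrt_nonneg A).posSemidef
  have hSS : S * S = A := CFC.sqrt_mul_sqrt_self A hA.nonneg
  have hdS : S.det * S.det = A.det := by rw [← Matrix.det_mul, hSS]
  have hdSne : S.det ≠ 0 := by
    intro h; rw [h, mul_zero] at hdS; exact hdet hdS.symm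
  have hU : IsUnit S.det := isUnit_iff_ne_zero.mpr hdSne
  set C : Matrix n n ℝ := S⁻¹ * B * S⁻¹ with hCdef
  have hSinvH : (S⁻¹)ᴴ = S⁻¹ := by
    rw [Matrix.conjTranspose_nonsing_inv, hS.1]
  have hC : C.PosSemidef := by
    have := hB.conjTranspose_mul_mul_same (S⁻¹)
    rwa [hSinvH] at this
  have key : A + B = S * (1 + C) * S := by
    have h2 : S * C * S = B := by
      simp only [hCdef, Matrix.mul_assoc]
      rw [Matrix.nonsing_inv_mul _ hU, Matrix.mul_one, ← Matrix.mul_assoc,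
        Matrix.mul_nonsing_inv _ hU, Matrix.one_mul]
    rw [mul_add, add_mul, mul_one, hSS, h2]
  calc A.det = A.det * 1 := (mul_one _).symm
    _ ≤ A.det * (1 + C).det := by
        refine mul_le_mul_of_nonneg_left (det_one_add_psd hC) ?_
        rw [← hdS]; exact mul_self_nonneg _
    _ = (A + B).det := by
        rw [key, Matrix.det_mul, Matrix.det_mul, ← hdS]; ring

end PSDLemmas


lemma prod_range_fact (k : ℕ) : ∏ l ∈ Finset.range (k + 1), Nat.factorial l = Nat.superFactorial k := by
  induction k with
  | zero => simp
  | succ k ih => rw [Finset.prod_range_succ, ih, Nat.superFactorial_succ, mul_comm]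

lemma numeric_key : ∀ k : ℕ, 6 ≤ k →
    8 ^ (k + 1) * k ^ k ≤ 2 ^ (∑ i ∈ Finset.range (k + 1), i) * Nat.superFactorial k := by
  intro k hk
  induction k with
  | zero => omega
  | succ k ih =>
    rcases Nat.lt_or_ge k 6 with h6 | h6
    · interval_cases k
      · omega
      · omega
      · omega
      · omega
      · omega
      · -- k = 5, so k+1 = 6 : base case
        norm_num [Finset.sum_range_succ, Nat.superFactorial, Nat.factorial]
    · have ih' := ih h6
      rw [Finset.sum_range_succ, Nat.superFactorial_succ]
      have h1 : (k + 1) ^ (k + 1) ≤ (k + 1) * (2 ^ k * k ^ k) := by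
        rw [pow_succ]
        rw [mul_comm ((k+1)^k) (k+1)]
        refine Nat.mul_le_mul_left _ ?_
        calc (k + 1) ^ k ≤ (2 * k) ^ k := Nat.pow_le_pow_left (by omega) k
          _ = 2 ^ k * k ^ k := mul_pow 2 k k
      calc 8 ^ (k + 1 + 1) * (k + 1) ^ (k + 1)
          ≤ 8 ^ (k + 1 + 1) * ((k + 1) * (2 ^ k * k ^ k)) := Nat.mul_le_mul_left _ h1
        _ = (8 * (k + 1) * 2 ^ k) * (8 ^ (k + 1) * k ^ k) := by ring
        _ ≤ (2 ^ (k + 1) * Nat.factorial (k + 1)) * (8 ^ (k + 1) * k ^ k) := by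
            refine Nat.mul_le_mul_right _ ?_
            have : 8 * (k + 1) ≤ 2 * Nat.factorial (k + 1) := by
              have h4 : 4 ≤ Nat.factorial k := le_trans (by norm_num [Nat.factorial]) (Nat.factorial_le h6)
              rw [Nat.factorial_succ]
              calc 8 * (k + 1) = (k + 1) * 8 := by ring
                _ ≤ (k + 1) * (2 * Nat.factorial k) := Nat.mul_le_mul_left _ (by omega)
                _ = 2 * ((k + 1) * Nat.factorial k) := by ring
            calc 8 * (k + 1) * 2 ^ k ≤ 2 * Nat.factorial (k + 1) * 2 ^ k :=
                  Nat.mul_le_mul_right _ this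
              _ = 2 ^ (k + 1) * Nat.factorial (k + 1) := by ring
        _ ≤ (2 ^ (k + 1) * Nat.factorial (k + 1)) *
              (2 ^ (∑ i ∈ Finset.range (k + 1), i) * Nat.superFactorial k) :=
            Nat.mul_le_mul_left _ ih'
        _ = 2 ^ (∑ i ∈ Finset.range (k + 1), i + (k + 1)) *
              ((k + 1).factorial * Nat.superFactorial k) := by rw [pow_add]; ring


noncomputable def cc (m : ℕ) : ℝ := ((2:ℝ) ^ m * m.factorial)⁻¹

lemma cc_nonneg (m : ℕ) : 0 ≤ cc m := by unfold cc; positivity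

lemma cc_eq (z : ℝ) (m : ℕ) : (z / 2) ^ m / m.factorial = cc m * z ^ m := by
  rw [div_pow, cc, div_div, mul_inv]
  ring

lemma cc_summable (z : ℝ) : Summable (fun m => cc m * z ^ m) :=
  (Real.summable_pow_div_factorial (z / 2)).congr (fun m => cc_eq z m)

lemma exp_eq_cc (z : ℝ) : Real.exp (z / 2) = ∑' m, cc m * z ^ m := by
  rw [Real.exp_eq_exp_ℝ, NormedSpace.exp_eq_tsum_div]
  exact tsum_congr (fun m => cc_eq z m)

open Matrix

variable {n : ℕ}

lemma Mk_apply (x : Fin n → ℝ) (i j : Fin n) :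
    (vandermonde x * diagonal (fun l : Fin n => cc l) * (vandermonde x)ᴴ) i j
      = ∑ l ∈ Finset.range n, cc l * (x i * x j) ^ l := by
  rw [Matrix.mul_apply, ← Fin.sum_univ_eq_sum_range]
  refine Finset.sum_congr rfl fun l _ => ?_
  rw [Matrix.mul_apply]
  simp [Matrix.diagonal, vandermonde, Finset.sum_ite_eq, mul_pow]
  ring

lemma M_sub_Mk (x : Fin n → ℝ) (i j : Fin n) :
    Real.exp (x i * x j / 2)
      - (vandermonde x * diagonal (fun l : Fin n => cc l) * (vandermonde x)ᴴ) i j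
      = ∑' m, cc (m + n) * (x i * x j) ^ (m + n) := by
  rw [Mk_apply, exp_eq_cc]
  have h := Summable.sum_add_tsum_nat_add (f := fun m => cc m * (x i * x j) ^ m) n
    (cc_summable (x i * x j))
  linarith [h]

lemma tail_psd (x : Fin n → ℝ) :
    (Matrix.of (fun i j => Real.exp (x i * x j / 2))
      - vandermonde x * diagonal (fun l : Fin n => cc l) * (vandermonde x)ᴴ).PosSemidef := by
  set Mk := vandermonde x * diagonal (fun l : Fin n => cc l) * (vandermonde x)ᴴ with hMk
  have hMkpsd : Mk.PosSemidef := by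
    refine PosSemidef.mul_mul_conjTranspose_same ?_ (vandermonde x)
    exact Matrix.posSemidef_diagonal_iff.mpr fun l => cc_nonneg l
  refine Matrix.PosSemidef.of_dotProduct_mulVec_nonneg ?_ ?_
  · refine Matrix.IsHermitian.sub ?_ hMkpsd.1
    ext i j
    simp [Matrix.conjTranspose_apply, mul_comm]
  · intro u
    set q : ℕ → ℝ := fun m => cc (m + n) * (∑ i, u i * x i ^ (m + n)) ^ 2 with hq
    set t : (Fin n × Fin n) → ℕ → ℝ :=
      fun p m => u p.1 * u p.2 * (cc (m + n) * (x p.1 * x p.2) ^ (m + n)) with ht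
    have hsumm : ∀ p : Fin n × Fin n, Summable (t p) := by
      intro p
      exact ((summable_nat_add_iff n).mpr (cc_summable (x p.1 * x p.2))).mul_left _
    have key : star u ⬝ᵥ (Matrix.of (fun i j => Real.exp (x i * x j / 2)) - Mk) *ᵥ u
        = ∑' m, q m := by
      have h1 : star u ⬝ᵥ (Matrix.of (fun i j => Real.exp (x i * x j / 2)) - Mk) *ᵥ u
          = ∑ p : Fin n × Fin n,
              u p.1 * u p.2 * (Real.exp (x p.1 * x p.2 / 2) - Mk p.1 p.2) := by
        rw [Fintype.sum_prod_type]
        simp only [dotProduct, Matrix.mulVec, star_trivial, Matrix.sub_apply,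
          Matrix.of_apply, Finset.mul_sum, dotProduct]
        refine Finset.sum_congr rfl fun i _ => Finset.sum_congr rfl fun j _ => ?_
        ring
      rw [h1]
      have h2 : ∀ p : Fin n × Fin n,
          u p.1 * u p.2 * (Real.exp (x p.1 * x p.2 / 2) - Mk p.1 p.2) = ∑' m, t p m := by
        intro p
        rw [M_sub_Mk, ← tsum_mul_left]
      simp only [h2]
      rw [← Summable.tsum_finsetSum (fun p _ => hsumm p)]
      refine tsum_congr fun m => ?_
      rw [hq, Fintype.sum_prod_type]
      show (∑ i, ∑ j, t (i, j) m) = cc (m + n) * (∑ i, u i * x i ^ (m + n)) ^ 2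
      have hsq : (∑ i, u i * x i ^ (m + n)) ^ 2
          = ∑ i, ∑ j, (u i * x i ^ (m + n)) * (u j * x j ^ (m + n)) := by
        rw [sq, Finset.sum_mul_sum]
      rw [hsq, Finset.mul_sum]
      refine Finset.sum_congr rfl fun i _ => ?_
      rw [Finset.mul_sum]
      refine Finset.sum_congr rfl fun j _ => ?_
      simp only [ht, mul_pow]
      ring
    rw [key]
    refine tsum_nonneg fun m => ?_
    exact mul_nonneg (cc_nonneg _) (sq_nonneg _)


section MainProof

open Matrix

theorem det_heat_kernel_time_two_lower_bound :
    ∃ k₀ : ℕ, ∀ k : ℕ, k₀ ≤ k →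
      Matrix.det (Matrix.of fun i j : Fin (k + 1) => heatK 2 (xPt k i) (xPt k j)) ≥
        (((k : ℝ) ^ (k ^ 2)))⁻¹ := by
  use 6
  intro k hk
  classical
  set x : Fin (k+1) → ℝ := xPt k with hx
  set T : ℕ := ∑ i ∈ Finset.range (k+1), i with hT
  set F : ℝ := (Nat.superFactorial k : ℝ) with hF
  have hkpos : (0:ℝ) < k := by exact_mod_cast Nat.pos_of_ne_zero (by omega)
  have hk0 : (k:ℝ) ≠ 0 := ne_of_gt hkpos
  have hsfpos : ∀ m : ℕ, 0 < Nat.superFactorial m := by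
    intro m
    induction m with
    | zero => simp
    | succ m ih => rw [Nat.superFactorial_succ]; exact Nat.mul_pos (Nat.factorial_pos _) ih
  have hFpos : (0:ℝ) < F := by rw [hF]; exact_mod_cast hsfpos k
  -- determinant of the Vandermonde matrix at the points x
  have hdetV : (Matrix.vandermonde x).det = (2/(k:ℝ))^T * F := by
    rw [Matrix.det_vandermonde]
    have hstep : ∀ i j : Fin (k+1), x j - x i = (2/(k:ℝ)) * ((j:ℝ) - (i:ℝ)) := by
      intro i j
      rw [hx]
      unfold xPt
      field_simp
      ring
    calc (∏ i : Fin (k+1), ∏ j ∈ Finset.Ioi i, (x j - x i))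
        = ∏ i : Fin (k+1), ∏ j ∈ Finset.Ioi i, ((2/(k:ℝ)) * ((j:ℝ) - (i:ℝ))) := by
          refine Finset.prod_congr rfl fun i _ => Finset.prod_congr rfl fun j _ => hstep i j
      _ = (∏ i : Fin (k+1), ∏ j ∈ Finset.Ioi i, (2/(k:ℝ)))
            * ∏ i : Fin (k+1), ∏ j ∈ Finset.Ioi i, ((j:ℝ) - (i:ℝ)) := by
          rw [← Finset.prod_mul_distrib]
          exact Finset.prod_congr rfl fun i _ => by rw [← Finset.prod_mul_distrib]
      _ = (2/(k:ℝ))^T * F := by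
          congr 1
          · rw [show (∏ i : Fin (k+1), ∏ _j ∈ Finset.Ioi i, (2/(k:ℝ)))
                = ∏ i : Fin (k+1), (2/(k:ℝ)) ^ (Finset.Ioi i).card from
              Finset.prod_congr rfl fun i _ => Finset.prod_const _]
            rw [Finset.prod_pow_eq_pow_sum]
            congr 1
            have hcard : ∀ i : Fin (k+1), (Finset.Ioi i).card = k - (i:ℕ) := by
              intro i
              rw [Fin.card_Ioi]; omega
            simp only [hcard]
            rw [Fin.sum_univ_eq_sum_range (fun m => k - m)]
            rw [hT]
            have := Finset.sum_range_reflect (fun m => m) (k+1)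
            simp only [Nat.add_sub_cancel] at this
            exact this
          · rw [show (∏ i : Fin (k+1), ∏ j ∈ Finset.Ioi i, ((j:ℝ) - (i:ℝ)))
                = (Matrix.vandermonde (fun i : Fin (k+1) => (i:ℝ))).det from
              (Matrix.det_vandermonde _).symm]
            rw [Matrix.det_vandermonde_id_eq_superFactorial]
  -- product of the coefficients cc
  have hprodcc : (∏ l : Fin (k+1), cc (l:ℕ)) = ((2:ℝ)^T * F)⁻¹ := by
    unfold cc
    rw [Fin.prod_univ_eq_prod_range (fun l => ((2:ℝ) ^ l * (l:ℕ).factorial)⁻¹)]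
    rw [Finset.prod_inv_distrib]
    congr 1
    rw [Finset.prod_mul_distrib]
    congr 1
    · rw [Finset.prod_pow_eq_pow_sum]
    · rw [hF, ← prod_range_fact k]
      push_cast
      rfl
  -- the truncated matrix
  set D : Matrix (Fin (k+1)) (Fin (k+1)) ℝ := Matrix.diagonal (fun l : Fin (k+1) => cc (l:ℕ))
    with hD
  set V : Matrix (Fin (k+1)) (Fin (k+1)) ℝ := Matrix.vandermonde x with hV
  set Mk : Matrix (Fin (k+1)) (Fin (k+1)) ℝ := V * D * Vᴴ with hMk
  have hdetMk : Mk.det = ((2/(k:ℝ))^T * F)^2 * ((2:ℝ)^T * F)⁻¹ := by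
    rw [hMk, Matrix.det_mul, Matrix.det_mul, Matrix.det_conjTranspose, star_trivial,
      hD, Matrix.det_diagonal, hprodcc, hdetV]
    ring
  have hdetMkpos : 0 < Mk.det := by
    rw [hdetMk]
    have h1 : (0:ℝ) < (2/(k:ℝ))^T * F := by positivity
    positivity
  set Mexp : Matrix (Fin (k+1)) (Fin (k+1)) ℝ := Matrix.of (fun i j => Real.exp (x i * x j / 2))
    with hMexp
  have hMkpsd : Mk.PosSemidef :=
    PosSemidef.mul_mul_conjTranspose_same
      (Matrix.posSemidef_diagonal_iff.mpr fun l => cc_nonneg _) V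
  have htail : (Mexp - Mk).PosSemidef := tail_psd x
  have hdetle : Mk.det ≤ Mexp.det := by
    have h := det_le_det_add_psd hMkpsd htail (ne_of_gt hdetMkpos)
    rwa [show Mk + (Mexp - Mk) = Mexp by abel] at h
  -- factor the heat kernel matrix
  have hfac : (Matrix.of fun i j : Fin (k + 1) => heatK 2 (x i) (x j)).det
      = (∏ i, ((Real.sqrt (2 * Real.pi * 2))⁻¹ * Real.exp (-(x i)^2/4)))
        * ((∏ j, Real.exp (-(x j)^2/4)) * Mexp.det) := by
    have hent : (Matrix.of fun i j : Fin (k + 1) => heatK 2 (x i) (x j))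
        = Matrix.of fun i j => ((Real.sqrt (2 * Real.pi * 2))⁻¹ * Real.exp (-(x i)^2/4)) *
            ((Matrix.of (fun i' j' : Fin (k+1) => Real.exp (-(x j')^2/4) * Mexp i' j')) i j) := by
      ext i j
      simp only [Matrix.of_apply, hMexp]
      unfold heatK
      have hexp : Real.exp (-(x i - x j)^2/(2*2))
          = Real.exp (-(x i)^2/4) * (Real.exp (-(x j)^2/4) * Real.exp (x i * x j / 2)) := by
        rw [← Real.exp_add, ← Real.exp_add]
        congr 1
        ring
      rw [hexp]
      ring
    rw [hent, Matrix.det_mul_column, Matrix.det_mul_row]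
  -- lower bound for the Gaussian prefactors
  have hbound : ((8:ℝ)⁻¹)^(k+1)
      ≤ (∏ i, ((Real.sqrt (2 * Real.pi * 2))⁻¹ * Real.exp (-(x i)^2/4)))
        * (∏ j, Real.exp (-(x j)^2/4)) := by
    rw [← Finset.prod_mul_distrib]
    have hone : ∀ i : Fin (k+1), (8:ℝ)⁻¹
        ≤ ((Real.sqrt (2 * Real.pi * 2))⁻¹ * Real.exp (-(x i)^2/4)) * Real.exp (-(x i)^2/4) := by
      intro i
      have hx2 : (x i)^2 ≤ 1 := by
        rw [hx]
        unfold xPt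
        rw [div_pow]
        rw [div_le_one (by positivity)]
        have h0 : (0:ℝ) ≤ ((i:ℕ):ℝ) := Nat.cast_nonneg _
        have h1 : ((i:ℕ):ℝ) ≤ k := by exact_mod_cast Fin.is_le i
        nlinarith
      have hsq : Real.sqrt (2 * Real.pi * 2) ≤ 4 := by
        have h16 : (2 * Real.pi * 2) ≤ 16 := by nlinarith [Real.pi_le_four]
        calc Real.sqrt (2 * Real.pi * 2) ≤ Real.sqrt 16 := Real.sqrt_le_sqrt h16
          _ = 4 := by
            rw [show (16:ℝ) = 4^2 by norm_num, Real.sqrt_sq (by norm_num : (0:ℝ) ≤ 4)]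
      have hsqpos : 0 < Real.sqrt (2 * Real.pi * 2) := by positivity
      have h1 : (4:ℝ)⁻¹ ≤ (Real.sqrt (2 * Real.pi * 2))⁻¹ := by
        exact inv_anti₀ hsqpos hsq
      have h2 : (2:ℝ)⁻¹ ≤ Real.exp (-(x i)^2/4) * Real.exp (-(x i)^2/4) := by
        rw [← Real.exp_add]
        have hexp := Real.add_one_le_exp (-(x i)^2/4 + -(x i)^2/4)
        nlinarith
      calc (8:ℝ)⁻¹ = 4⁻¹ * 2⁻¹ := by norm_num
        _ ≤ (Real.sqrt (2 * Real.pi * 2))⁻¹ * (Real.exp (-(x i)^2/4) * Real.exp (-(x i)^2/4)) := by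
            refine mul_le_mul h1 h2 (by norm_num) (by positivity)
        _ = ((Real.sqrt (2 * Real.pi * 2))⁻¹ * Real.exp (-(x i)^2/4)) * Real.exp (-(x i)^2/4) := by
            ring
    calc ((8:ℝ)⁻¹)^(k+1) = ∏ _i : Fin (k+1), (8:ℝ)⁻¹ := by
          rw [Finset.prod_const, Finset.card_univ, Fintype.card_fin]
      _ ≤ ∏ i, (((Real.sqrt (2 * Real.pi * 2))⁻¹ * Real.exp (-(x i)^2/4))
            * Real.exp (-(x i)^2/4)) :=
          Finset.prod_le_prod (fun _ _ => by norm_num) (fun i _ => hone i)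
  have hPpos : (0:ℝ) < (∏ i, ((Real.sqrt (2 * Real.pi * 2))⁻¹ * Real.exp (-(x i)^2/4)))
      * (∏ j, Real.exp (-(x j)^2/4)) := by
    have hpi := Real.pi_pos
    refine mul_pos (Finset.prod_pos fun i _ => by positivity)
      (Finset.prod_pos fun j _ => by positivity)
  -- the numeric inequality
  have hnumR : ((8:ℝ))^(k+1) * (k:ℝ)^k ≤ 2^T * F := by
    rw [hF, hT]
    exact_mod_cast numeric_key k hk
  have hTT : T + T = k^2 + k := by
    have h2 : T * 2 = (k+1) * k := Finset.sum_range_id_mul_two (k+1)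
    calc T + T = T * 2 := by ring
      _ = (k+1) * k := h2
      _ = k^2 + k := by ring
  have hMkval : Mk.det = 2^T * F * (((k:ℝ)^(k^2) * (k:ℝ)^k)⁻¹) := by
    rw [hdetMk]
    have hkk : (k:ℝ)^(k^2) * (k:ℝ)^k = (k:ℝ)^T * (k:ℝ)^T := by
      rw [← pow_add, ← pow_add, hTT]
    rw [hkk, div_pow]
    field_simp
  -- assemble
  rw [ge_iff_le, hfac, ← mul_assoc]
  calc ((k:ℝ)^(k^2))⁻¹ ≤ ((8:ℝ)⁻¹)^(k+1) * Mk.det := by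
        rw [hMkval]
        have hrw : ((8:ℝ)⁻¹)^(k+1) * (2^T * F * (((k:ℝ)^(k^2) * (k:ℝ)^k)⁻¹))
            = (2^T * F) / ((8:ℝ)^(k+1) * ((k:ℝ)^(k^2) * (k:ℝ)^k)) := by
          rw [inv_pow, div_eq_mul_inv, mul_inv]
          ring
        rw [hrw, inv_eq_one_div, div_le_div_iff₀ (by positivity) (by positivity)]
        calc 1 * ((8:ℝ)^(k+1) * ((k:ℝ)^(k^2) * (k:ℝ)^k))
            = ((8:ℝ)^(k+1) * (k:ℝ)^k) * (k:ℝ)^(k^2) := by ring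
          _ ≤ (2^T * F) * (k:ℝ)^(k^2) :=
            mul_le_mul_of_nonneg_right hnumR (by positivity)
          _ = 2^T * F * (k:ℝ)^(k^2) := by ring
    _ ≤ ((∏ i, ((Real.sqrt (2 * Real.pi * 2))⁻¹ * Real.exp (-(x i)^2/4)))
          * (∏ j, Real.exp (-(x j)^2/4))) * Mk.det :=
        mul_le_mul_of_nonneg_right hbound (le_of_lt hdetMkpos)
    _ ≤ ((∏ i, ((Real.sqrt (2 * Real.pi * 2))⁻¹ * Real.exp (-(x i)^2/4)))
          * (∏ j, Real.exp (-(x j)^2/4))) * Mexp.det :=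
        mul_le_mul_of_nonneg_left hdetle (le_of_lt hPpos)

end MainProof
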